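/- Let X and Y be nonempty sets, f : X → ℝ, g : X × Y → ℝ, and A, B ⊆ X nonempty sets such that: (a) sup_{x∈A} f(x) < inf_{x∈B} f(x); (b) sup_{y∈Y} inf_{x∈A} g(x,y) ≤ 0; (c) inf_{x∈B} sup_{y∈Y} g(x,y) ≥ 0; (d) for every x ∈ X \ B, sup_{y∈Y} g(x,y) = +∞. Then sup_{y∈Y} inf_{x∈X} (f(x) + g(x,y)) < inf_{x∈X} sup_{y∈Y} (f(x) + g(x,y)). -/

import Mathlib

lemma aux_add_iSup {ι : Sort*} (r : ℝ) (h : ι → EReal) :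
    (⨆ i, ((r : EReal) + h i)) = (r : EReal) + ⨆ i, h i := by
  apply le_antisymm
  · exact iSup_le fun i => add_le_add_right (le_iSup h i) _
  · rw [add_comm]
    refine (EReal.le_sub_iff_add_le (Or.inl (EReal.coe_ne_bot r))
      (Or.inl (EReal.coe_ne_top r))).mp ?_
    refine iSup_le fun i => (EReal.le_sub_iff_add_le (Or.inl (EReal.coe_ne_bot r))
      (Or.inl (EReal.coe_ne_top r))).mpr ?_
    rw [add_comm]
    exact le_iSup (fun i => (r : EReal) + h i) i

lemma aux_add_iInf {ι : Sort*} (r : ℝ) (h : ι → EReal) :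
    (⨅ i, ((r : EReal) + h i)) = (r : EReal) + ⨅ i, h i := by
  apply le_antisymm
  · rw [add_comm]
    refine (EReal.sub_le_iff_le_add (Or.inl (EReal.coe_ne_bot r))
      (Or.inl (EReal.coe_ne_top r))).mp ?_
    refine le_iInf fun i => (EReal.sub_le_iff_le_add (Or.inl (EReal.coe_ne_bot r))
      (Or.inl (EReal.coe_ne_top r))).mpr ?_
    rw [add_comm]
    exact iInf_le (fun i => (r : EReal) + h i) i
  · exact le_iInf fun i => add_le_add_right (iInf_le h i) _

/-- Proposition 2.2: a criterion for a strict minimax inequality. -/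
theorem stmt0 {X Y : Type*} [Nonempty X] [Nonempty Y]
    (f : X → ℝ) (g : X × Y → ℝ) (A B : Set X) (hA : A.Nonempty) (hB : B.Nonempty)
    (ha : (⨆ x : A, (f x : EReal)) < ⨅ x : B, (f x : EReal))
    (hb : (⨆ y : Y, ⨅ x : A, (g (x, y) : EReal)) ≤ 0)
    (hc : (0 : EReal) ≤ ⨅ x : B, ⨆ y : Y, (g (x, y) : EReal))
    (hd : ∀ x : X, x ∉ B → (⨆ y : Y, (g (x, y) : EReal)) = ⊤) :
    (⨆ y : Y, ⨅ x : X, ((f x + g (x, y) : ℝ) : EReal)) <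
      ⨅ x : X, ⨆ y : Y, ((f x + g (x, y) : ℝ) : EReal) := by
  obtain ⟨a₀, ha₀⟩ := hA
  obtain ⟨b₀, hb₀⟩ := hB
  set M : EReal := ⨆ x : A, (f x : EReal) with hM
  set N : EReal := ⨅ x : B, (f x : EReal) with hN
  have hMt : M ≠ ⊤ := ha.ne_top
  have hMb : M ≠ ⊥ := by
    refine ne_of_gt (lt_of_lt_of_le ?_ (le_iSup (fun x : A => (f x : EReal)) ⟨a₀, ha₀⟩))
    exact EReal.bot_lt_coe _
  have hNb : N ≠ ⊥ := by
    refine ne_of_gt (lt_trans ?_ ha)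
    exact lt_of_lt_of_le (EReal.bot_lt_coe (f a₀)) (le_iSup (fun x : A => (f x : EReal)) ⟨a₀, ha₀⟩)
  have hNt : N ≠ ⊤ := by
    refine ne_of_lt (lt_of_le_of_lt (iInf_le (fun x : B => (f x : EReal)) ⟨b₀, hb₀⟩) ?_)
    exact EReal.coe_lt_top _
  set m : ℝ := M.toReal
  set n : ℝ := N.toReal
  have hMm : (m : EReal) = M := EReal.coe_toReal hMt hMb
  have hNn : (n : EReal) = N := EReal.coe_toReal hNt hNb
  -- Upper bound on the LHS
  have hL : (⨆ y : Y, ⨅ x : X, ((f x + g (x, y) : ℝ) : EReal)) ≤ (m : EReal) := by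
    have step1 : ∀ y : Y, (⨅ x : X, ((f x + g (x, y) : ℝ) : EReal)) ≤
        (m : EReal) + ⨅ x : A, (g (x, y) : EReal) := by
      intro y
      rw [← aux_add_iInf]
      refine le_iInf fun a => ?_
      refine iInf_le_of_le (a : X) ?_
      rw [EReal.coe_add]
      refine add_le_add_left ?_ _
      rw [hMm]
      exact le_iSup (fun x : A => (f x : EReal)) a
    calc (⨆ y : Y, ⨅ x : X, ((f x + g (x, y) : ℝ) : EReal))
        ≤ ⨆ y : Y, ((m : EReal) + ⨅ x : A, (g (x, y) : EReal)) := iSup_mono step1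
      _ = (m : EReal) + ⨆ y : Y, ⨅ x : A, (g (x, y) : EReal) := aux_add_iSup m _
      _ ≤ (m : EReal) + 0 := add_le_add_right hb _
      _ = (m : EReal) := add_zero _
  -- Lower bound on the RHS
  have hR : (n : EReal) ≤ ⨅ x : X, ⨆ y : Y, ((f x + g (x, y) : ℝ) : EReal) := by
    refine le_iInf fun x => ?_
    have hsplit : (⨆ y : Y, ((f x + g (x, y) : ℝ) : EReal)) =
        (f x : EReal) + ⨆ y : Y, (g (x, y) : EReal) := by
      simp_rw [EReal.coe_add]
      exact aux_add_iSup (f x) _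
    rw [hsplit]
    by_cases hx : x ∈ B
    · have h1 : (n : EReal) ≤ (f x : EReal) := by
        rw [hNn]
        exact iInf_le (fun x : B => (f x : EReal)) ⟨x, hx⟩
      have h2 : (0 : EReal) ≤ ⨆ y : Y, (g (x, y) : EReal) :=
        le_trans hc (iInf_le (fun x : B => ⨆ y : Y, (g ((x : X), y) : EReal)) ⟨x, hx⟩)
      calc (n : EReal) = (n : EReal) + 0 := (add_zero _).symm
        _ ≤ (f x : EReal) + ⨆ y : Y, (g (x, y) : EReal) := add_le_add h1 h2
    · rw [hd x hx, EReal.add_top_of_ne_bot (EReal.coe_ne_bot _)]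
      exact le_top
  refine lt_of_le_of_lt hL (lt_of_lt_of_le ?_ hR)
  rw [hMm, hNn]
  exact ha
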